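/- Let A be a reduced commutative ring, and let B be an A-module with two direct sum decompositions B = I ⊕ C = J ⊕ D, where I, J, C, D are finite free A-modules. Suppose that for every ring homomorphism from A to an algebraically closed field κ (equivalently, every geometric point of Spec A), the image of J ⊗_A κ in B ⊗_A κ is contained in the image of I ⊗_A κ. Then J ⊆ I as submodules of B. -/

import Mathlib

universe u v

/-- Let `A` be a reduced commutative ring and `B` an `A`-module with two direct sum
decompositions `B = I ⊕ C = J ⊕ D` where `I, C, J, D` are finite free.  If for every
homomorphism from `A` to an algebraically closed field `κ` (i.e. every geometric point of
`Spec A`) the image of `J ⊗_A κ` in `B ⊗_A κ` is contained in the image of `I ⊗_A κ`,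
then `J ⊆ I` as submodules of `B`. -/
theorem submodule_le_of_forall_geometric_point
    {A : Type u} [CommRing A] [IsReduced A]
    {B : Type v} [AddCommGroup B] [Module A B]
    (I C J D : Submodule A B) (hIC : IsCompl I C) (hJD : IsCompl J D)
    [Module.Finite A I] [Module.Free A I] [Module.Finite A C] [Module.Free A C]
    [Module.Finite A J] [Module.Free A J] [Module.Finite A D] [Module.Free A D]
    (h : ∀ (κ : Type u) [Field κ] [IsAlgClosed κ] [Algebra A κ],
      J.baseChange κ ≤ I.baseChange κ) :
    J ≤ I := by
  intro x hx
  -- the projection onto `C` along `I`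
  set π : B →ₗ[A] C := Submodule.linearProjOfIsCompl C I hIC.symm with hπdef
  suffices hπx : π x = 0 by
    exact (Submodule.linearProjOfIsCompl_apply_eq_zero_iff hIC.symm).mp hπx
  -- choose a basis of `C`; it suffices to kill each coordinate of `π x`
  let b := Module.Free.chooseBasis A C
  have key : ∀ i, b.repr (π x) i = 0 := by
    intro i
    set a : A := b.repr (π x) i with ha
    -- it suffices that `a` lies in every prime ideal, since `A` is reduced
    have hmem : ∀ (p : Ideal A), p.IsPrime → a ∈ p := by
      intro p hp
      -- the geometric point associated to `p`
      let κ : Type u := AlgebraicClosure (FractionRing (A ⧸ p))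
      let φ : A →+* κ :=
        (algebraMap (FractionRing (A ⧸ p)) κ).comp
          ((algebraMap (A ⧸ p) (FractionRing (A ⧸ p))).comp (algebraMap A (A ⧸ p)))
      letI : Algebra A κ := φ.toAlgebra
      -- the coordinate functional
      let ℓ : B →ₗ[A] A := (b.coord i) ∘ₗ π
      let L := LinearMap.baseChange κ ℓ
      have hI : I.baseChange κ ≤ LinearMap.ker L := by
        rw [Submodule.baseChange_eq_span, Submodule.span_le]
        rintro - ⟨m, hm, rfl⟩
        simp only [SetLike.mem_coe, LinearMap.mem_ker, TensorProduct.mk_apply, L,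
          LinearMap.baseChange_tmul]
        have : π m = 0 := Submodule.linearProjOfIsCompl_apply_right' hIC.symm hm
        simp [ℓ, this]
      have hxmem : (1 : κ) ⊗ₜ[A] x ∈ I.baseChange κ :=
        h κ (Submodule.tmul_mem_baseChange_of_mem 1 hx)
      have hL : L ((1 : κ) ⊗ₜ[A] x) = 0 := hI hxmem
      have hℓx : ℓ x = a := by simp [ℓ, Module.Basis.coord_apply, ha]
      rw [LinearMap.baseChange_tmul, hℓx] at hL
      have h0 : (TensorProduct.rid A κ) ((1 : κ) ⊗ₜ[A] a) = 0 := by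
        rw [hL]; exact LinearEquiv.map_zero _
      rw [TensorProduct.rid_tmul] at h0
      have hφa : φ a = 0 := by
        rwa [← Algebra.algebraMap_eq_smul_one] at h0
      -- unfold the kernel of `φ`
      have h2 : algebraMap (FractionRing (A ⧸ p)) κ
          (algebraMap (A ⧸ p) (FractionRing (A ⧸ p)) (algebraMap A (A ⧸ p) a)) = 0 := hφa
      have h3 : algebraMap (A ⧸ p) (FractionRing (A ⧸ p)) (algebraMap A (A ⧸ p) a) = 0 :=
        (algebraMap (FractionRing (A ⧸ p)) κ).injective (by rw [map_zero]; exact h2)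
      have h1 : algebraMap A (A ⧸ p) a = 0 :=
        IsFractionRing.injective (A ⧸ p) (FractionRing (A ⧸ p)) (by rw [map_zero]; exact h3)
      exact Ideal.Quotient.eq_zero_iff_mem.mp
        (by rwa [Ideal.Quotient.algebraMap_eq] at h1)
    have : a ∈ nilradical A := by
      rw [nilradical_eq_sInf, Submodule.mem_sInf]
      intro p hp
      exact hmem p hp
    rw [nilradical_eq_zero] at this
    simpa using this
  have : b.repr (π x) = 0 := Finsupp.ext key
  have := b.repr.injective (by simpa using this)
  simpa using this
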